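/- Let n ≥ 4 with n ≢ 2 (mod 4), and write n = 2^e·m with m odd. Let B = C_2^e × C_m, a group of order n. Then the image λ(B) of the left regular representation of B inside Perm(B) ≅ S_n consists entirely of even permutations, so λ(B) is a regular subgroup of A_n complementary to a point stabilizer A_{n-1}. -/

import Mathlib

lemma sign_fpf_involution {α : Type*} [DecidableEq α] [Fintype α]
    (σ : Equiv.Perm α) (h2 : σ * σ = 1) (hf : ∀ x, σ x ≠ x)
    (h4 : Fintype.card α % 4 = 0) : Equiv.Perm.sign σ = 1 := by
  have hmem : ∀ k ∈ σ.cycleType, k = 2 := by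
    intro k hk
    have h1 : k ∣ orderOf σ := σ.lcm_cycleType ▸ Multiset.dvd_lcm hk
    have hd : orderOf σ ∣ 2 := orderOf_dvd_of_pow_eq_one (by rw [pow_two]; exact h2)
    exact le_antisymm (Nat.le_of_dvd two_pos (h1.trans hd))
      (Equiv.Perm.two_le_of_mem_cycleType hk)
  have hsupp : σ.support = Finset.univ := by
    ext x; simp [Equiv.Perm.mem_support, hf x]
  have hsum : σ.cycleType.sum = Fintype.card α := by
    rw [Equiv.Perm.sum_cycleType, hsupp, Finset.card_univ]
  have hrep : σ.cycleType = Multiset.replicate (Multiset.card σ.cycleType) 2 :=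
    Multiset.eq_replicate.mpr ⟨rfl, hmem⟩
  have hsum2 : 2 * Multiset.card σ.cycleType = Fintype.card α := by
    conv_rhs => rw [← hsum]
    rw [hrep]; simp [Multiset.sum_replicate, mul_comm]
  rw [Equiv.Perm.sign_of_cycleType, hsum]
  have : Even (Fintype.card α + Multiset.card σ.cycleType) := by
    rw [Nat.even_add, Nat.even_iff, Nat.even_iff]; omega
  exact Even.neg_one_pow this

section AddLeft
variable {G : Type*} [AddGroup G]

lemma addLeft_add' (a b : G) :
    (Equiv.addLeft (a + b) : Equiv.Perm G) = Equiv.addLeft a * Equiv.addLeft b :=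
  Equiv.ext fun x => add_assoc a b x

lemma addLeft_zero' : (Equiv.addLeft (0 : G) : Equiv.Perm G) = 1 :=
  Equiv.ext fun x => zero_add x

lemma addLeft_pow' (a : G) (k : ℕ) :
    (Equiv.addLeft a : Equiv.Perm G) ^ k = Equiv.addLeft (k • a) := by
  induction k with
  | zero => simp [addLeft_zero']
  | succ k ih => rw [pow_succ', succ_nsmul', addLeft_add', ih]

end AddLeft

theorem regular_subgroup_of_alternating (n e m : ℕ) [NeZero m] (hn : 4 ≤ n)
    (hn2 : n % 4 ≠ 2) (hm : Odd m) (hnem : n = 2 ^ e * m) :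
    (∀ b : (Fin e → ZMod 2) × ZMod m, Equiv.Perm.sign (Equiv.addLeft b) = 1) ∧
      ∃ J : Subgroup (Equiv.Perm ((Fin e → ZMod 2) × ZMod m)),
        (J : Set (Equiv.Perm ((Fin e → ZMod 2) × ZMod m))) =
          Set.range (Equiv.addLeft : _ → Equiv.Perm ((Fin e → ZMod 2) × ZMod m)) ∧
        J ≤ alternatingGroup ((Fin e → ZMod 2) × ZMod m) ∧
        J ⊓ MulAction.stabilizer (Equiv.Perm ((Fin e → ZMod 2) × ZMod m))
            ((0 : (Fin e → ZMod 2) × ZMod m)) = ⊥ ∧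
        Nat.card J *
            Nat.card
              ((MulAction.stabilizer (Equiv.Perm ((Fin e → ZMod 2) × ZMod m))
                  ((0 : (Fin e → ZMod 2) × ZMod m)) ⊓
                alternatingGroup ((Fin e → ZMod 2) × ZMod m) :
                  Subgroup (Equiv.Perm ((Fin e → ZMod 2) × ZMod m)))) =
          Nat.card (alternatingGroup ((Fin e → ZMod 2) × ZMod m)) := by
  set B := (Fin e → ZMod 2) × ZMod m with hB
  have hcardB : Fintype.card B = n := by
    rw [hnem]
    simp [hB, Fintype.card_prod, ZMod.card]
  -- Part 1 : every translation is even
  have key : ∀ b : B, Equiv.Perm.sign (Equiv.addLeft b) = 1 := by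
    intro b
    obtain ⟨v, c⟩ := b
    have hsplit : ((v, c) : B) = (v, 0) + (0, c) := by simp
    rw [hsplit, addLeft_add', map_mul]
    have hs2 : Equiv.Perm.sign (Equiv.addLeft ((0, c) : B)) = 1 := by
      set u := Equiv.Perm.sign (Equiv.addLeft ((0, c) : B)) with hu
      have hum : u ^ m = 1 := by
        rw [hu, ← map_pow, addLeft_pow', show (m • ((0, c) : B)) = 0 by
          ext <;> simp [nsmul_eq_mul, ZMod.natCast_self], addLeft_zero', map_one]
      rcases Int.units_eq_one_or u with h | h
      · exact h
      · rw [h, Odd.neg_one_pow hm] at hum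
        exact absurd hum (by decide)
    have hs1 : Equiv.Perm.sign (Equiv.addLeft ((v, 0) : B)) = 1 := by
      by_cases hv : v = 0
      · rw [hv, show ((0, 0) : B) = 0 from rfl, addLeft_zero', map_one]
      · have he : e ≠ 0 := by
          rintro rfl
          exact hv (funext fun i => i.elim0)
        have h2 : Equiv.addLeft ((v, 0) : B) * Equiv.addLeft ((v, 0) : B) = 1 := by
          rw [← addLeft_add', show ((v, 0) : B) + (v, 0) = 0 by
            ext i <;> simp [CharTwo.add_self_eq_zero], addLeft_zero']
        have hf : ∀ x : B, Equiv.addLeft ((v, 0) : B) x ≠ x := by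
          intro x hx
          have hax : ((v, 0) : B) + x = x := hx
          have h0 : ((v, 0) : B) = 0 := by rwa [add_eq_right] at hax
          exact hv (congrArg Prod.fst h0)
        have h4 : Fintype.card B % 4 = 0 := by
          rw [hcardB]
          have h2dvd : 2 ∣ n := by
            rw [hnem]
            exact Dvd.dvd.mul_right (dvd_pow_self 2 he) m
          omega
        exact sign_fpf_involution _ h2 hf h4
    rw [hs1, hs2, mul_one]
  refine ⟨key, ?_⟩
  have hinj : Function.Injective (Equiv.addLeft : B → Equiv.Perm B) := by
    intro a b h
    have := congrArg (fun σ : Equiv.Perm B => σ 0) h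
    simpa using this
  -- the subgroup J
  refine ⟨{ carrier := Set.range (Equiv.addLeft : B → Equiv.Perm B)
            one_mem' := ⟨0, addLeft_zero'⟩
            mul_mem' := ?_
            inv_mem' := ?_ }, rfl, ?_, ?_, ?_⟩
  · rintro _ _ ⟨a, rfl⟩ ⟨b, rfl⟩
    exact ⟨a + b, addLeft_add' a b⟩
  · rintro _ ⟨a, rfl⟩
    refine ⟨-a, eq_inv_of_mul_eq_one_left ?_⟩
    rw [← addLeft_add', neg_add_cancel, addLeft_zero']
  · rintro _ ⟨a, rfl⟩
    exact Equiv.Perm.mem_alternatingGroup.mpr (key a)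
  · refine le_antisymm ?_ bot_le
    intro x hx
    rw [Subgroup.mem_inf] at hx
    obtain ⟨⟨a, rfl⟩, hx2⟩ := hx
    rw [MulAction.mem_stabilizer_iff] at hx2
    have hx2' : (Equiv.addLeft a) (0 : B) = 0 := hx2
    have ha : a = 0 := by simpa using hx2'
    rw [Subgroup.mem_bot, ha, addLeft_zero']
  · -- cardinality equation
    haveI : Nontrivial B := Fintype.one_lt_card_iff_nontrivial.mp (by omega)
    set G := Equiv.Perm B with hG
    set K := MulAction.stabilizer G (0 : B) with hK
    set A := alternatingGroup B with hA
    have hcardJ : Nat.card (Set.range (Equiv.addLeft : B → G)) = Nat.card B :=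
      Nat.card_range_of_injective hinj
    -- orbit-stabilizer : Nat.card B * Nat.card K = Nat.card G
    have horb : MulAction.orbit G (0 : B) = Set.univ := by
      refine Set.eq_univ_of_forall fun x => ?_
      refine ⟨Equiv.swap 0 x, ?_⟩
      show Equiv.swap 0 x 0 = x
      simp
    have h1 : Nat.card B * Nat.card K = Nat.card G := by
      haveI : Fintype ↑(MulAction.orbit G (0 : B)) :=
        (Set.toFinite (MulAction.orbit G (0 : B))).fintype
      have horbst := MulAction.card_orbit_mul_card_stabilizer_eq_card_group G (0 : B)
      rw [← Nat.card_eq_fintype_card (α := G),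
        ← Nat.card_eq_fintype_card (α := MulAction.orbit G (0 : B)),
        ← Nat.card_eq_fintype_card (α := MulAction.stabilizer G (0 : B))] at horbst
      rw [← horbst, horb]
      congr 1
      exact Nat.card_congr (Equiv.Set.univ B).symm
    -- sign is surjective on the stabilizer
    have hsurj : Function.Surjective ((Equiv.Perm.sign (α := B)).comp K.subtype) := by
      intro u
      obtain ⟨a, ha, b, hb, hab⟩ :
          ∃ a ∈ Finset.univ.erase (0 : B), ∃ b ∈ Finset.univ.erase (0 : B), a ≠ b := by
        refine Finset.one_lt_card.mp ?_
        rw [Finset.card_erase_of_mem (Finset.mem_univ _), Finset.card_univ, hcardB]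
        omega
      rw [Finset.mem_erase] at ha hb
      rcases Int.units_eq_one_or u with rfl | rfl
      · exact ⟨1, map_one _⟩
      · refine ⟨⟨Equiv.swap a b, ?_⟩, ?_⟩
        · show Equiv.swap a b 0 = 0
          exact Equiv.swap_apply_of_ne_of_ne (Ne.symm ha.1) (Ne.symm hb.1)
        · show Equiv.Perm.sign (Equiv.swap a b) = -1
          exact Equiv.Perm.sign_swap hab
    have hker : ((Equiv.Perm.sign (α := B)).comp K.subtype).ker = A.subgroupOf K := by
      ext x
      simp [MonoidHom.mem_ker, Subgroup.mem_subgroupOf, hA,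
        Equiv.Perm.mem_alternatingGroup]
    have hidx : (A.subgroupOf K).index = 2 := by
      rw [← hker, Subgroup.index_ker, MonoidHom.range_eq_top.mpr hsurj]
      rw [Subgroup.card_top, Nat.card_eq_fintype_card, Fintype.card_units_int]
    have hequiv : Nat.card (A.subgroupOf K) = Nat.card (K ⊓ A : Subgroup G) := by
      calc Nat.card (A.subgroupOf K) = Nat.card ((A ⊓ K).subgroupOf K) := by
            rw [Subgroup.inf_subgroupOf_right]
        _ = Nat.card (A ⊓ K : Subgroup G) :=
            Nat.card_congr (Subgroup.subgroupOfEquivOfLe inf_le_right).toEquiv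
        _ = Nat.card (K ⊓ A : Subgroup G) := by rw [inf_comm]
    have h3 : 2 * Nat.card (K ⊓ A : Subgroup G) = Nat.card K := by
      have := Subgroup.index_mul_card (A.subgroupOf K)
      rwa [hidx, hequiv] at this
    have h2alt : 2 * Nat.card A = Nat.card G := by
      rw [Nat.card_eq_fintype_card, Nat.card_eq_fintype_card]
      exact two_mul_card_alternatingGroup
    refine Nat.eq_of_mul_eq_mul_left (show 0 < 2 by norm_num) ?_
    calc 2 * (Nat.card (Set.range (Equiv.addLeft : B → G))
            * Nat.card (K ⊓ A : Subgroup G))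
        = Nat.card (Set.range (Equiv.addLeft : B → G))
            * (2 * Nat.card (K ⊓ A : Subgroup G)) := by ring
      _ = Nat.card B * Nat.card K := by rw [h3, hcardJ]
      _ = Nat.card G := h1
      _ = 2 * Nat.card A := h2alt.symm
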